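/- arXiv:2604.10804 — 4 statements merged into one kernel-verified Lean document; each statement's English description precedes it below -/
import Mathlib

section
/- Assume 0 < δ < 1 and max{2, 2δ+1} < δ_b < 3. Suppose that for each q ≥ −1 the functions a_q, G_q : [t₀, t₀+T] → [0,∞) are measurable, that the Bernstein-type bound G_q(t) ≤ C_B · Σ_{p=−1}^{q} λ_p^{1+3/r} a_p(t) holds for every q ≥ −1 and every t, that the function t ↦ Λ_b(t) (the abstract magnetic determining wavenumber computed from a(·,t) and G(·,t)) is measurable, and that e_q : [t₀, t₀+T] → [0,∞) are measurable for each q ≥ −1 with ⟨Σ_{q≥−1} λ_q² e_q⟩ < ∞. Assume the intermittency relation ⟨Σ_{q≥−1} λ_q^{−1+δ_b+6/r} a_q²⟩ ≤ C_I · ⟨Σ_{q≥−1} λ_q² e_q⟩ for some constant C_I > 0. Define ε_b := μ · ⟨Σ_{q≥−1} λ_q² e_q⟩ and κ_e := (ε_b/μ³)^{1/(δ_b−1)}. Then there exists a constant C, depending only on L, r, c, δ, δ_b, C_B and C_I, such that ⟨Λ_b⟩ ≤ 1 + C · κ_e. -/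
open MeasureTheory
open scoped ENNReal

/-- The admissibility condition at level `q` in the definition of the abstract magnetic
determining wavenumber (`λ_q = 2^q`): `(L λ_{p-q})^δ λ_p^{3/r} a_p < c μ` for every
integer `p > q`, and `λ_q^{-1} G_q < c μ`. -/
def GoodB (L c μ r δ : ℝ) (a G : ℤ → ℝ) (q : ℕ) : Prop :=
  (∀ p : ℤ, (q : ℤ) < p →
      (L * (2:ℝ) ^ (p - (q : ℤ))) ^ δ * ((2:ℝ) ^ p) ^ (3 / r) * a p < c * μ) ∧
    ((2:ℝ) ^ (q : ℤ))⁻¹ * G q < c * μ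

/-- The abstract magnetic determining wavenumber `Λ_b = λ_Q = 2^Q`, where `Q` is the
least admissible natural number; `Λ_b = ∞` if no natural number is admissible. -/
noncomputable def LambdaB (L c μ r δ : ℝ) (a G : ℤ → ℝ) : ℝ≥0∞ :=
  sInf {x : ℝ≥0∞ | ∃ q : ℕ, GoodB L c μ r δ a G q ∧ x = 2 ^ q}

/-- Time average `⟨f⟩ = (1/T) ∫_{t₀}^{t₀+T} f` of an `ℝ≥0∞`-valued function. -/
noncomputable def timeAvg (t₀ T : ℝ) (f : ℝ → ℝ≥0∞) : ℝ≥0∞ :=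
  (∫⁻ t in Set.Icc t₀ (t₀ + T), f t) / ENNReal.ofReal T

/-- Sum over dyadic indices `q ≥ -1` of an `ℝ≥0∞`-valued quantity. -/
noncomputable def sumQ (F : ℤ → ℝ≥0∞) : ℝ≥0∞ :=
  ∑' n : ℕ, F ((n : ℤ) - 1)

lemma geom_sum_Icc_le {u : ℝ} (hu : 1 < u) (Q : ℕ) :
    ∑ p ∈ Finset.Icc (-1:ℤ) (Q:ℤ), u ^ p ≤ u ^ (Q:ℤ) * (u / (u - 1)) := by
  have hu0 : (0:ℝ) < u := lt_trans one_pos hu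
  have hu1 : (0:ℝ) < u - 1 := sub_pos.2 hu
  induction Q with
  | zero =>
      have h : Finset.Icc (-1:ℤ) ((0:ℕ):ℤ) = {-1, 0} := by
        ext x; simp [Finset.mem_Icc]; omega
      rw [h]
      have : ∑ p ∈ ({-1, 0} : Finset ℤ), u ^ p = u⁻¹ + 1 := by norm_num
      rw [this]
      have hui : u⁻¹ * u = 1 := inv_mul_cancel₀ (ne_of_gt hu0)
      rw [zpow_natCast, pow_zero, one_mul, le_div_iff₀ hu1]
      nlinarith [inv_pos.2 hu0]
  | succ n ih =>
      have hins : Finset.Icc (-1:ℤ) ((n+1:ℕ):ℤ) =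
          insert ((n:ℤ)+1) (Finset.Icc (-1:ℤ) (n:ℤ)) := by
        ext x; simp [Finset.mem_Icc, Finset.mem_insert]; omega
      rw [hins, Finset.sum_insert (by simp [Finset.mem_Icc])]
      have hz : u ^ ((n:ℤ)+1) = u * u ^ (n:ℤ) := by
        rw [zpow_add_one₀ (ne_of_gt hu0)]; ring
      have hpos : (0:ℝ) < u ^ (n:ℤ) := zpow_pos hu0 _
      have hcast : ((n+1:ℕ):ℤ) = (n:ℤ)+1 := by push_cast; ring
      rw [hcast, hz]
      calc u * u ^ (n:ℤ) + ∑ p ∈ Finset.Icc (-1:ℤ) (n:ℤ), u ^ p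
          ≤ u * u ^ (n:ℤ) + u ^ (n:ℤ) * (u / (u - 1)) := by linarith [ih]
        _ = u * u ^ (n:ℤ) * (u / (u - 1)) := by field_simp; ring

lemma pointwise_bound
    (L r c δ δb CB : ℝ) (hL : 1 ≤ L) (hr : 0 < r) (hc : 0 < c) (hCB : 0 < CB)
    (hδ0 : 0 < δ) (hδb2 : 2 < δb) (hδbδ : 2*δ + 1 < δb) (hδb3 : δb < 3)
    (μ : ℝ) (hμ : 0 < μ) (a G : ℤ → ℝ)
    (ha : ∀ q : ℤ, -1 ≤ q → 0 ≤ a q)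
    (hG0 : ∀ q : ℤ, -1 ≤ q → 0 ≤ G q)
    (hB : ∀ q : ℤ, -1 ≤ q →
      G q ≤ CB * ∑ p ∈ Finset.Icc (-1:ℤ) q, ((2:ℝ)^p)^(1+3/r) * a p) :
    LambdaB L c μ r δ a G ≤
      1 + ENNReal.ofReal (2 * ((max (L^δ)
            (CB * ((2:ℝ)^((3-δb)/2) / ((2:ℝ)^((3-δb)/2) - 1))))^2 / c^2) ^ (1/(δb-1))) *
        ((ENNReal.ofReal (μ^2))⁻¹ *
          sumQ (fun q => ENNReal.ofReal (((2:ℝ)^q)^(-1+δb+6/r) * a q ^ 2))) ^ (1/(δb-1)) := by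
  set β : ℝ := (3-δb)/2 with hβ
  set u : ℝ := (2:ℝ)^β with hu
  have hβ0 : 0 < β := by rw [hβ]; linarith
  have hu1 : 1 < u := by
    rw [hu]; exact Real.one_lt_rpow_iff_of_pos two_pos |>.2 (Or.inl ⟨one_lt_two, hβ0⟩)
  have hu0 : 0 < u := lt_trans one_pos hu1
  set K : ℝ := max (L^δ) (CB * (u / (u - 1))) with hK
  have hL0 : (0:ℝ) < L := lt_of_lt_of_le one_pos hL
  have hK0 : 0 < K := lt_of_lt_of_le (Real.rpow_pos_of_pos hL0 δ) (le_max_left _ _)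
  set p0 : ℝ := 1/(δb-1) with hp0def
  have hδb1 : (0:ℝ) < δb - 1 := by linarith
  have hp0pos : 0 < p0 := by rw [hp0def]; positivity
  set C0 : ℝ := 2 * (K^2/c^2) ^ p0 with hC0
  have hC0pos : 0 < C0 := by rw [hC0]; positivity
  set e : ℝ := -1 + δb + 6/r with he
  set S : ℝ≥0∞ := sumQ (fun q => ENNReal.ofReal (((2:ℝ)^q)^e * a q ^ 2)) with hSdef
  by_cases hS : S = ⊤
  · -- RHS is ⊤
    have hμ2 : ENNReal.ofReal (μ^2) ≠ ⊤ := ENNReal.ofReal_ne_top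
    have h1 : (ENNReal.ofReal (μ^2))⁻¹ * S = ⊤ := by
      rw [hS, ENNReal.mul_top (by simp [hμ2])]
    rw [h1, ENNReal.top_rpow_of_pos hp0pos, ENNReal.mul_top (by
      simp [ENNReal.ofReal_eq_zero, not_le, hC0pos])]
    exact le_top
  · -- main case: S finite
    set s : ℝ := S.toReal with hsdef
    have hs0 : 0 ≤ s := ENNReal.toReal_nonneg
    -- termwise bound from the sum
    have key : ∀ q : ℤ, -1 ≤ q → ((2:ℝ)^q)^e * a q ^ 2 ≤ s := by
      intro q hq
      have hmem : (( (q+1).toNat : ℤ) - 1) = q := by omega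
      have hle : ENNReal.ofReal (((2:ℝ)^q)^e * a q ^ 2) ≤ S := by
        rw [hSdef, sumQ]
        have := ENNReal.le_tsum (f := fun n : ℕ =>
          ENNReal.ofReal (((2:ℝ)^((n:ℤ)-1))^e * a ((n:ℤ)-1) ^ 2)) (q+1).toNat
        rwa [hmem] at this
      have := ENNReal.toReal_mono hS hle
      rwa [ENNReal.toReal_ofReal (by positivity)] at this
    -- pointwise bound on a
    have h2 : ∀ x y : ℝ, ((2:ℝ)^x)^y = (2:ℝ)^(x*y) :=
      fun x y => (Real.rpow_mul (by norm_num) x y).symm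
    have h2add : ∀ x y : ℝ, (2:ℝ)^(x+y) = (2:ℝ)^x * (2:ℝ)^y :=
      fun x y => Real.rpow_add two_pos x y
    have h2z : ∀ m : ℤ, (2:ℝ)^m = (2:ℝ)^((m:ℝ)) := fun m => (Real.rpow_intCast 2 m).symm
    have h2p : ∀ x : ℝ, (0:ℝ) < (2:ℝ)^x := fun x => Real.rpow_pos_of_pos two_pos x
    set A : ℝ := Real.sqrt s with hA
    have hA0 : 0 ≤ A := Real.sqrt_nonneg _
    have hAkey : ∀ q : ℤ, -1 ≤ q → a q ≤ A * (2:ℝ)^(-(q:ℝ)*e/2) := by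
      intro q hq
      have hk := key q hq
      rw [h2z q, h2 (q:ℝ) e] at hk
      have hsq : a q ^ 2 ≤ (A * (2:ℝ)^(-(q:ℝ)*e/2))^2 := by
        have hexp : (A * (2:ℝ)^(-(q:ℝ)*e/2))^2 = s * (2:ℝ)^(-((q:ℝ)*e)) := by
          rw [mul_pow, ← Real.rpow_natCast ((2:ℝ)^(-(q:ℝ)*e/2)) 2, ← Real.rpow_mul (by norm_num),
            Real.sq_sqrt hs0]
          norm_num
        rw [hexp, Real.rpow_neg (by norm_num)]
        calc a q ^ 2 = ((2:ℝ)^((q:ℝ)*e) * a q ^ 2) * ((2:ℝ)^((q:ℝ)*e))⁻¹ := by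
              field_simp
          _ ≤ s * ((2:ℝ)^((q:ℝ)*e))⁻¹ := by
              apply mul_le_mul_of_nonneg_right hk (by positivity)
      calc a q = Real.sqrt (a q ^ 2) := (Real.sqrt_sq (ha q hq)).symm
        _ ≤ Real.sqrt ((A * (2:ℝ)^(-(q:ℝ)*e/2))^2) := Real.sqrt_le_sqrt hsq
        _ = A * (2:ℝ)^(-(q:ℝ)*e/2) := Real.sqrt_sq (by positivity)
    have hLδK : L^δ ≤ K := le_max_left _ _
    have hcβK : CB * (u / (u - 1)) ≤ K := le_max_right _ _
    clear_value β u K p0 C0 e S s A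
    -- choose the least Q with X < 2^Q
    have hs'0 : (0:ℝ) ≤ K^2 * s / (c^2 * μ^2) :=
      div_nonneg (mul_nonneg (sq_nonneg K) hs0) (by positivity)
    set X : ℝ := (K^2 * s / (c^2 * μ^2)) ^ p0 with hXdef
    have hX0 : 0 ≤ X := Real.rpow_nonneg hs'0 _
    have hex : ∃ n : ℕ, X < 2 ^ n := pow_unbounded_of_one_lt X one_lt_two
    obtain ⟨Q, hQX, hQmin⟩ : ∃ Q : ℕ, X < 2^Q ∧ ∀ m : ℕ, m < Q → (2:ℝ)^m ≤ X := by
      refine ⟨Nat.find hex, Nat.find_spec hex, fun m hm => ?_⟩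
      linarith [not_lt.mp (Nat.find_min hex hm)]
    -- master inequality
    have master : K * (A * (2:ℝ)^(-(Q:ℝ)*((δb-1)/2))) < c * μ := by
      have hcμ : 0 < c * μ := mul_pos hc hμ
      have hsq : (K * (A * (2:ℝ)^(-(Q:ℝ)*((δb-1)/2))))^2 < (c*μ)^2 := by
        have hXlt : K^2 * s / (c^2 * μ^2) < (2:ℝ)^((Q:ℝ)*(δb-1)) := by
          have h1 : X ^ (δb-1) < ((2:ℝ)^Q) ^ (δb-1) :=
            Real.rpow_lt_rpow hX0 hQX hδb1
          have h2' : X ^ (δb-1) = K^2 * s / (c^2 * μ^2) := by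
            rw [hXdef]
            rw [← Real.rpow_mul hs'0, hp0def, one_div,
              inv_mul_cancel₀ (ne_of_gt hδb1), Real.rpow_one]
          have h3' : ((2:ℝ)^Q) ^ (δb-1) = (2:ℝ)^((Q:ℝ)*(δb-1)) := by
            rw [← Real.rpow_natCast 2 Q, ← Real.rpow_mul (by norm_num)]
          rw [h2', h3'] at h1
          exact h1
        have hexpand : (K * (A * (2:ℝ)^(-(Q:ℝ)*((δb-1)/2))))^2
            = K^2 * s * ((2:ℝ)^((Q:ℝ)*(δb-1)))⁻¹ := by
          rw [mul_pow, mul_pow, ← Real.rpow_natCast ((2:ℝ)^(-(Q:ℝ)*((δb-1)/2))) 2,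
            ← Real.rpow_mul (by norm_num), hA, Real.sq_sqrt hs0]
          rw [show (-(Q:ℝ)*((δb-1)/2)) * (2:ℕ) = -((Q:ℝ)*(δb-1)) by push_cast; ring,
            Real.rpow_neg (by norm_num)]
          ring
        rw [hexpand]
        have hZpos : (0:ℝ) < (2:ℝ)^((Q:ℝ)*(δb-1)) := h2p _
        rw [div_lt_iff₀ (by positivity)] at hXlt
        calc K^2 * s * ((2:ℝ)^((Q:ℝ)*(δb-1)))⁻¹
            < ((2:ℝ)^((Q:ℝ)*(δb-1)) * (c^2*μ^2)) * ((2:ℝ)^((Q:ℝ)*(δb-1)))⁻¹ := by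
              apply mul_lt_mul_of_pos_right hXlt (by positivity)
          _ = c^2*μ^2 := by field_simp
          _ = (c*μ)^2 := by ring
      exact lt_of_pow_lt_pow_left₀ 2 (le_of_lt hcμ) hsq
    -- Q is good
    have good : GoodB L c μ r δ a G Q := by
      constructor
      · -- high-frequency condition
        intro p hp
        have hp1 : (-1:ℤ) ≤ p := by omega
        have hpQ : (Q:ℝ) ≤ (p:ℝ) := by exact_mod_cast le_of_lt hp
        have hap := hAkey p hp1
        have hzsub : (2:ℝ) ^ (p - (Q:ℤ)) = (2:ℝ)^((p:ℝ) - (Q:ℝ)) := by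
          rw [h2z (p - (Q:ℤ))]; push_cast; ring_nf
        have hzp : (2:ℝ) ^ p = (2:ℝ)^((p:ℝ)) := h2z p
        calc (L * (2:ℝ) ^ (p - (Q:ℤ))) ^ δ * ((2:ℝ) ^ p) ^ (3 / r) * a p
            ≤ (L * (2:ℝ) ^ (p - (Q:ℤ))) ^ δ * ((2:ℝ) ^ p) ^ (3 / r) *
              (A * (2:ℝ)^(-(p:ℝ)*e/2)) := by
              apply mul_le_mul_of_nonneg_left hap
              rw [hzsub, hzp]
              positivity
          _ = (L^δ * A) * (2:ℝ)^(((p:ℝ)-(Q:ℝ))*δ + (p:ℝ)*(3/r) + (-(p:ℝ)*e/2)) := by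
              rw [hzsub, hzp, Real.mul_rpow (le_of_lt hL0) (le_of_lt (h2p _)),
                h2 ((p:ℝ)-(Q:ℝ)) δ, h2 (p:ℝ) (3/r), h2add, h2add]
              ring
          _ ≤ (L^δ * A) * (2:ℝ)^(-(Q:ℝ)*((δb-1)/2)) := by
              apply mul_le_mul_of_nonneg_left _
                (mul_nonneg (Real.rpow_nonneg (le_of_lt hL0) δ) hA0)
              apply Real.rpow_le_rpow_of_exponent_le one_le_two
              have hprod : 0 ≤ ((p:ℝ) - (Q:ℝ)) * ((δb-1)/2 - δ) :=
                mul_nonneg (by linarith) (by linarith)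
              have hz0 : (p:ℝ) * (3/r) - (p:ℝ) * (6/r) / 2 = 0 := by ring
              rw [he]
              nlinarith [hprod, hz0]
          _ = L^δ * (A * (2:ℝ)^(-(Q:ℝ)*((δb-1)/2))) := by ring
          _ ≤ K * (A * (2:ℝ)^(-(Q:ℝ)*((δb-1)/2))) := by
              apply mul_le_mul_of_nonneg_right hLδK
                (mul_nonneg hA0 (le_of_lt (h2p _)))
          _ < c * μ := master
      · -- low-frequency condition on G
        have hQ1 : (-1:ℤ) ≤ (Q:ℤ) := by omega
        have hGB := hB (Q:ℤ) hQ1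
        have hsum : ∑ p ∈ Finset.Icc (-1:ℤ) (Q:ℤ), ((2:ℝ)^p)^(1+3/r) * a p
            ≤ A * (u ^ ((Q:ℤ)) * (u / (u - 1))) := by
          calc ∑ p ∈ Finset.Icc (-1:ℤ) (Q:ℤ), ((2:ℝ)^p)^(1+3/r) * a p
              ≤ ∑ p ∈ Finset.Icc (-1:ℤ) (Q:ℤ), A * u ^ p := by
                apply Finset.sum_le_sum
                intro p hpmem
                have hp1 : (-1:ℤ) ≤ p := (Finset.mem_Icc.mp hpmem).1
                have hap := hAkey p hp1
                have hup : u ^ p = (2:ℝ)^((p:ℝ)*β) := by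
                  rw [hu, ← Real.rpow_intCast ((2:ℝ)^β) p, h2]
                  ring_nf
                calc ((2:ℝ)^p)^(1+3/r) * a p
                    ≤ ((2:ℝ)^p)^(1+3/r) * (A * (2:ℝ)^(-(p:ℝ)*e/2)) := by
                      apply mul_le_mul_of_nonneg_left hap
                      rw [h2z p]; positivity
                  _ = A * (2:ℝ)^((p:ℝ)*(1+3/r) + (-(p:ℝ)*e/2)) := by
                      rw [h2z p, h2 (p:ℝ) (1+3/r), h2add]; ring
                  _ = A * u ^ p := by
                      rw [hup]
                      congr 1
                      congr 1
                      rw [he, hβ]; ring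
              _ = A * ∑ p ∈ Finset.Icc (-1:ℤ) (Q:ℤ), u ^ p := by
                rw [Finset.mul_sum]
              _ ≤ A * (u ^ ((Q:ℤ)) * (u / (u - 1))) := by
                apply mul_le_mul_of_nonneg_left (geom_sum_Icc_le hu1 Q) hA0
        have hGle : G (Q:ℤ) ≤ CB * (A * (u ^ ((Q:ℤ)) * (u / (u - 1)))) :=
          le_trans hGB (mul_le_mul_of_nonneg_left hsum (le_of_lt hCB))
        have hinv0 : (0:ℝ) ≤ ((2:ℝ) ^ ((Q:ℕ):ℤ))⁻¹ := by positivity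
        calc ((2:ℝ) ^ ((Q:ℕ):ℤ))⁻¹ * G (Q:ℤ)
            ≤ ((2:ℝ) ^ ((Q:ℕ):ℤ))⁻¹ * (CB * (A * (u ^ ((Q:ℤ)) * (u / (u - 1))))) :=
              mul_le_mul_of_nonneg_left hGle hinv0
          _ = (CB * (u / (u - 1))) * (A * (2:ℝ)^(-(Q:ℝ)*((δb-1)/2))) := by
              have e1 : ((2:ℝ) ^ ((Q:ℕ):ℤ))⁻¹ = (2:ℝ)^(-(Q:ℝ)) := by
                rw [h2z, Real.rpow_neg (by norm_num)]
                norm_num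
              have e2 : u ^ ((Q:ℤ)) = (2:ℝ)^((Q:ℝ)*β) := by
                rw [hu, ← Real.rpow_intCast ((2:ℝ)^β) (Q:ℤ), h2]
                norm_num [mul_comm]
              have e3 : -(Q:ℝ)*((δb-1)/2) = -(Q:ℝ) + (Q:ℝ)*β := by
                rw [hβ]; ring
              rw [e1, e2, e3, h2add]
              ring
          _ ≤ K * (A * (2:ℝ)^(-(Q:ℝ)*((δb-1)/2))) := by
              apply mul_le_mul_of_nonneg_right hcβK
                (mul_nonneg hA0 (le_of_lt (h2p _)))
          _ < c * μ := master
    -- conclude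
    have hLam : LambdaB L c μ r δ a G ≤ 2 ^ Q :=
      sInf_le ⟨Q, good, rfl⟩
    have hQreal : (2:ℝ) ^ Q ≤ 1 + 2 * X := by
      rcases Nat.eq_zero_or_pos Q with hQ0 | hQpos
      · rw [hQ0, pow_zero]; linarith only [hX0]
      · obtain ⟨m, hm⟩ := Nat.exists_eq_succ_of_ne_zero (Nat.pos_iff_ne_zero.mp hQpos)
        have h2m : (2:ℝ) ^ m ≤ X := hQmin m (by omega)
        have hpows : (2:ℝ) ^ Q = 2 * 2 ^ m := by rw [hm, pow_succ]; ring
        rw [hpows]; linarith only [h2m]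
    have hW : (ENNReal.ofReal (μ^2))⁻¹ * S = ENNReal.ofReal ((μ^2)⁻¹ * s) := by
      rw [← ENNReal.ofReal_toReal hS, ← hsdef,
        ← ENNReal.ofReal_inv_of_pos (by positivity : (0:ℝ) < μ^2),
        ← ENNReal.ofReal_mul (by positivity : (0:ℝ) ≤ (μ^2)⁻¹)]
    have hXW : ENNReal.ofReal (2 * X) =
        ENNReal.ofReal C0 * ((ENNReal.ofReal (μ^2))⁻¹ * S) ^ p0 := by
      have hbase : K^2 * s / (c^2 * μ^2) = (K^2/c^2) * ((μ^2)⁻¹ * s) := by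
        rw [div_eq_mul_inv, div_eq_mul_inv, mul_inv]
        ring
      have hreal : 2 * X = C0 * ((μ^2)⁻¹ * s)^p0 := by
        rw [hXdef, hC0, hbase,
          Real.mul_rpow (div_nonneg (sq_nonneg K) (sq_nonneg c))
            (mul_nonneg (inv_nonneg.mpr (sq_nonneg μ)) hs0)]
        ring
      rw [hW, ENNReal.ofReal_rpow_of_nonneg
          (mul_nonneg (inv_nonneg.mpr (sq_nonneg μ)) hs0) (le_of_lt hp0pos),
        ← ENNReal.ofReal_mul (le_of_lt hC0pos), hreal]
    calc LambdaB L c μ r δ a G ≤ 2 ^ Q := hLam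
      _ = ENNReal.ofReal ((2:ℝ) ^ Q) := by
          rw [ENNReal.ofReal_pow (by norm_num : (0:ℝ) ≤ 2), ENNReal.ofReal_ofNat]
      _ ≤ ENNReal.ofReal (1 + 2 * X) := ENNReal.ofReal_le_ofReal hQreal
      _ = 1 + ENNReal.ofReal (2 * X) := by
          rw [ENNReal.ofReal_add (by norm_num : (0:ℝ) ≤ 1) (by linarith only [hX0] : (0:ℝ) ≤ 2 * X),
            ENNReal.ofReal_one]
      _ = 1 + ENNReal.ofReal C0 * ((ENNReal.ofReal (μ^2))⁻¹ * S) ^ p0 := by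
          rw [hXW]

lemma timeAvg_rpow_le {t₀ T : ℝ} (hT : 0 < T) {f : ℝ → ℝ≥0∞}
    (hf : Measurable f) {p : ℝ} (hp0 : 0 < p) (hp1 : p < 1) :
    timeAvg t₀ T (fun t => f t ^ p) ≤ (timeAvg t₀ T f) ^ p := by
  set ν := volume.restrict (Set.Icc t₀ (t₀ + T)) with hν
  have hτ0 : ENNReal.ofReal T ≠ 0 := (ENNReal.ofReal_pos.2 hT).ne'
  have hτt : ENNReal.ofReal T ≠ ⊤ := ENNReal.ofReal_ne_top
  have hconj : (1/p).HolderConjugate (1/(1-p)) :=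
    Real.holderConjugate_one_div hp0 (by linarith) (by ring)
  have hmeas : AEMeasurable (fun t => f t ^ p) ν :=
    (hf.pow measurable_const).aemeasurable
  have H := ENNReal.lintegral_mul_le_Lp_mul_Lq ν hconj hmeas aemeasurable_const
    (g := fun _ => (1:ℝ≥0∞))
  simp only [Pi.mul_apply, mul_one] at H
  have h2 : ∀ t, (f t ^ p) ^ (1/p) = f t := by
    intro t
    rw [← ENNReal.rpow_mul, mul_one_div, div_self (ne_of_gt hp0), ENNReal.rpow_one]
  have h3 : ∀ t:ℝ, (1:ℝ≥0∞) ^ (1/(1-p)) = 1 := fun _ => ENNReal.one_rpow _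
  simp only [h2, ENNReal.one_rpow, one_div_one_div] at H
  have hvol : ∫⁻ _, (1:ℝ≥0∞) ∂ν = ENNReal.ofReal T := by
    rw [hν, lintegral_one, Measure.restrict_apply_univ, Real.volume_Icc,
      add_sub_cancel_left]
  rw [hvol] at H
  -- H : ∫⁻ f^p ∂ν ≤ (∫⁻ f ∂ν)^p * (ofReal T)^(1-p)
  have step : timeAvg t₀ T (fun t => f t ^ p) ≤
      ((∫⁻ t, f t ∂ν) ^ p * ENNReal.ofReal T ^ (1-p)) / ENNReal.ofReal T :=
    ENNReal.div_le_div_right H _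
  refine le_trans step (le_of_eq ?_)
  rw [div_eq_mul_inv, mul_assoc]
  have hTpow : ENNReal.ofReal T ^ (1-p) * (ENNReal.ofReal T)⁻¹ =
      (ENNReal.ofReal T)⁻¹ ^ p := by
    rw [← ENNReal.rpow_neg_one, ← ENNReal.rpow_add _ _ hτ0 hτt,
      ← ENNReal.rpow_mul]
    congr 1
    ring
  rw [hTpow, ← ENNReal.mul_rpow_of_nonneg _ _ (le_of_lt hp0), ← div_eq_mul_inv]
  rfl


/-- the time-averaged magnetic determining wavenumber for EMHD is bounded
by the phenomenological dissipation wavenumber: `⟨Λ_b⟩ ≤ λ_0 + C κ_e = 1 + C κ_e`, where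
`κ_e = (ε_b/μ³)^{1/(δ_b-1)}` and `ε_b = μ ⟨Σ_{q≥-1} λ_q² e_q⟩`, under the
scale-localized intermittency assumption. -/
theorem avg_magnetic_wavenumber_emhd
    (L r c δ δb CB CI : ℝ)
    (hL : 1 ≤ L) (hr : 0 < r) (hc : 0 < c) (hCB : 0 < CB) (hCI : 0 < CI)
    (hδ0 : 0 < δ) (hδ1 : δ < 1) (hδb1 : max 2 (2 * δ + 1) < δb) (hδb3 : δb < 3) :
    ∃ C : ℝ, 0 < C ∧
      ∀ (μ T t₀ : ℝ) (a G e : ℤ → ℝ → ℝ),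
        0 < μ → 0 < T →
        (∀ q : ℤ, -1 ≤ q → Measurable (a q)) →
        (∀ q : ℤ, -1 ≤ q → Measurable (G q)) →
        (∀ q : ℤ, -1 ≤ q → Measurable (e q)) →
        (∀ q : ℤ, -1 ≤ q → ∀ t ∈ Set.Icc t₀ (t₀ + T), 0 ≤ a q t) →
        (∀ q : ℤ, -1 ≤ q → ∀ t ∈ Set.Icc t₀ (t₀ + T), 0 ≤ G q t) →
        (∀ q : ℤ, -1 ≤ q → ∀ t ∈ Set.Icc t₀ (t₀ + T), 0 ≤ e q t) →
        -- Bernstein-type bound for every `q ≥ -1` and every `t`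
        (∀ q : ℤ, -1 ≤ q → ∀ t ∈ Set.Icc t₀ (t₀ + T),
            G q t ≤ CB * ∑ p ∈ Finset.Icc (-1 : ℤ) q,
              ((2:ℝ) ^ p) ^ (1 + 3 / r) * a p t) →
        -- measurability of `t ↦ Λ_b(t)`
        Measurable (fun t => LambdaB L c μ r δ (fun q => a q t) (fun q => G q t)) →
        -- finiteness of `⟨Σ_{q≥-1} λ_q² e_q⟩`
        timeAvg t₀ T (fun t => sumQ fun q =>
            ENNReal.ofReal (((2:ℝ) ^ q) ^ 2 * e q t)) ≠ ⊤ →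
        -- intermittency relation
        timeAvg t₀ T (fun t => sumQ fun q =>
            ENNReal.ofReal (((2:ℝ) ^ q) ^ (-1 + δb + 6 / r) * a q t ^ 2)) ≤
          ENNReal.ofReal CI *
            timeAvg t₀ T (fun t => sumQ fun q =>
              ENNReal.ofReal (((2:ℝ) ^ q) ^ 2 * e q t)) →
        -- conclusion: `⟨Λ_b⟩ ≤ 1 + C κ_e`
        timeAvg t₀ T (fun t => LambdaB L c μ r δ (fun q => a q t) (fun q => G q t)) ≤
          1 + ENNReal.ofReal C *
            ((ENNReal.ofReal μ *
                timeAvg t₀ T (fun t => sumQ fun q =>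
                  ENNReal.ofReal (((2:ℝ) ^ q) ^ 2 * e q t)) /
              ENNReal.ofReal μ ^ 3) ^ (1 / (δb - 1))) := by
  have hδb2 : 2 < δb := lt_of_le_of_lt (le_max_left _ _) hδb1
  have hδbδ : 2*δ + 1 < δb := lt_of_le_of_lt (le_max_right _ _) hδb1
  have hδb1' : (0:ℝ) < δb - 1 := by linarith
  set β : ℝ := (3-δb)/2 with hβ
  set p0 : ℝ := 1/(δb-1) with hp0def
  have hp0pos : 0 < p0 := by rw [hp0def]; positivity
  have hp0lt1 : p0 < 1 := by
    rw [hp0def, div_lt_one hδb1']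
    linarith
  have hβ0 : 0 < β := by rw [hβ]; linarith
  have hu1 : 1 < (2:ℝ)^β :=
    Real.one_lt_rpow_iff_of_pos two_pos |>.2 (Or.inl ⟨one_lt_two, hβ0⟩)
  have hL0 : (0:ℝ) < L := lt_of_lt_of_le one_pos hL
  set K : ℝ := max (L^δ) (CB * ((2:ℝ)^β / ((2:ℝ)^β - 1))) with hK
  have hK0 : 0 < K := lt_of_lt_of_le (Real.rpow_pos_of_pos hL0 δ) (le_max_left _ _)
  set C0 : ℝ := 2 * (K^2/c^2) ^ p0 with hC0
  have hC0pos : 0 < C0 := by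
    rw [hC0]
    have : (0:ℝ) < (K^2/c^2) ^ p0 := Real.rpow_pos_of_pos (by positivity) _
    linarith
  refine ⟨C0 * CI ^ p0, by positivity, ?_⟩
  intro μ T t₀ a G e hμ hT hma hmG hme ha0 hG0 he0 hB hmΛ hEfin hI
  set m : ℝ≥0∞ := ENNReal.ofReal μ with hm
  have hm0 : m ≠ 0 := (ENNReal.ofReal_pos.2 hμ).ne'
  have hmt : m ≠ ⊤ := ENNReal.ofReal_ne_top
  have hτ0 : ENNReal.ofReal T ≠ 0 := (ENNReal.ofReal_pos.2 hT).ne'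
  have hτt : ENNReal.ofReal T ≠ ⊤ := ENNReal.ofReal_ne_top
  set E : ℝ≥0∞ := timeAvg t₀ T (fun t => sumQ fun q =>
      ENNReal.ofReal (((2:ℝ) ^ q) ^ 2 * e q t)) with hE
  set S : ℝ → ℝ≥0∞ := fun t => sumQ (fun q =>
      ENNReal.ofReal (((2:ℝ)^q)^(-1+δb+6/r) * a q t ^ 2)) with hSdef
  set W : ℝ → ℝ≥0∞ := fun t => (ENNReal.ofReal (μ^2))⁻¹ * S t with hWdef
  have hSmeas : Measurable S := by
    rw [hSdef]
    simp only [sumQ]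
    apply Measurable.ennreal_tsum
    intro n
    exact (((hma ((n:ℤ)-1) (by omega)).pow_const 2).const_mul _).ennreal_ofReal
  have hWmeas : Measurable W := by
    rw [hWdef]
    exact hSmeas.const_mul _
  have hμ2t : (ENNReal.ofReal (μ^2))⁻¹ ≠ ⊤ :=
    ENNReal.inv_ne_top.mpr (ENNReal.ofReal_pos.2 (by positivity)).ne'
  -- pointwise estimate
  have hpt : ∀ t ∈ Set.Icc t₀ (t₀ + T),
      LambdaB L c μ r δ (fun q => a q t) (fun q => G q t) ≤
        1 + ENNReal.ofReal C0 * (W t) ^ p0 := by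
    intro t ht
    have := pointwise_bound L r c δ δb CB hL hr hc hCB hδ0 hδb2 hδbδ hδb3 μ hμ
      (fun q => a q t) (fun q => G q t)
      (fun q hq => ha0 q hq t ht) (fun q hq => hG0 q hq t ht)
      (fun q hq => hB q hq t ht)
    exact this
  -- average the pointwise estimate
  have h1 : timeAvg t₀ T
      (fun t => LambdaB L c μ r δ (fun q => a q t) (fun q => G q t)) ≤
      timeAvg t₀ T (fun t => 1 + ENNReal.ofReal C0 * (W t) ^ p0) :=
    ENNReal.div_le_div_right (setLIntegral_mono' measurableSet_Icc hpt) _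
  have h2 : timeAvg t₀ T (fun t => 1 + ENNReal.ofReal C0 * (W t) ^ p0) =
      1 + ENNReal.ofReal C0 * timeAvg t₀ T (fun t => (W t) ^ p0) := by
    unfold timeAvg
    rw [lintegral_add_left measurable_const,
      lintegral_const_mul' _ _ ENNReal.ofReal_ne_top, ENNReal.add_div]
    congr 1
    · rw [setLIntegral_const, one_mul, Real.volume_Icc, add_sub_cancel_left,
        ENNReal.div_self hτ0 hτt]
    · rw [mul_div_assoc]
  have h3 : timeAvg t₀ T (fun t => (W t) ^ p0) ≤ (timeAvg t₀ T W) ^ p0 :=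
    timeAvg_rpow_le hT hWmeas hp0pos hp0lt1
  have h4 : timeAvg t₀ T W = (ENNReal.ofReal (μ^2))⁻¹ * timeAvg t₀ T S := by
    unfold timeAvg
    rw [hWdef]
    rw [lintegral_const_mul' _ _ hμ2t, mul_div_assoc]
  have h5 : timeAvg t₀ T S ≤ ENNReal.ofReal CI * E := hI
  -- identify the right-hand side
  have hZ : m * E / m ^ 3 = (ENNReal.ofReal (μ^2))⁻¹ * E := by
    have h3' : m ^ 3 = m * m ^ 2 := by ring
    rw [h3', ENNReal.mul_div_mul_left E _ hm0 hmt, ENNReal.ofReal_pow (le_of_lt hμ) 2,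
      div_eq_mul_inv, mul_comm]
  set Z : ℝ≥0∞ := (ENNReal.ofReal (μ^2))⁻¹ * E with hZdef
  have h6 : (timeAvg t₀ T W) ^ p0 ≤ (ENNReal.ofReal CI) ^ p0 * Z ^ p0 := by
    rw [← ENNReal.mul_rpow_of_nonneg _ _ (le_of_lt hp0pos)]
    apply ENNReal.rpow_le_rpow _ (le_of_lt hp0pos)
    rw [h4, hZdef]
    calc (ENNReal.ofReal (μ^2))⁻¹ * timeAvg t₀ T S
        ≤ (ENNReal.ofReal (μ^2))⁻¹ * (ENNReal.ofReal CI * E) :=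
          mul_le_mul_right h5 _
      _ = ENNReal.ofReal CI * ((ENNReal.ofReal (μ^2))⁻¹ * E) := by ring
  have hCfin : (ENNReal.ofReal CI) ^ p0 = ENNReal.ofReal (CI ^ p0) :=
    ENNReal.ofReal_rpow_of_pos hCI
  calc timeAvg t₀ T (fun t => LambdaB L c μ r δ (fun q => a q t) (fun q => G q t))
      ≤ 1 + ENNReal.ofReal C0 * timeAvg t₀ T (fun t => (W t) ^ p0) := by
        rw [← h2]; exact h1
    _ ≤ 1 + ENNReal.ofReal C0 * ((ENNReal.ofReal CI) ^ p0 * Z ^ p0) := by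
        exact add_le_add_right (mul_le_mul_right (le_trans h3 h6) _) 1
    _ = 1 + ENNReal.ofReal (C0 * CI ^ p0) * Z ^ p0 := by
        rw [hCfin, ← mul_assoc, ← ENNReal.ofReal_mul (le_of_lt hC0pos)]
    _ = 1 + ENNReal.ofReal (C0 * CI ^ p0) * (m * E / m ^ 3) ^ p0 := by
        rw [hZ]
end

section
/- Assume 0 < δ < 1 and 2δ+1 < δ_b < 3. Then there exists a constant C, depending only on L, r, δ, δ_b and C_B, such that whenever Λ_b < ∞ one has (c μ)² · max(Λ_b − 1, 0)^{δ_b−1} ≤ C · Σ_{q≥−1} λ_q^{−1+δ_b+6/r} a_q². -/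
open scoped ENNReal


lemma geom_aux (t : ℝ) (ht : 1 < t) (Q : ℕ) :
    ∑ p ∈ Finset.Icc (-1 : ℤ) ((Q:ℤ)-1), t ^ p ≤ t ^ (Q:ℤ) / (t - 1) := by
  have ht0 : (0:ℝ) < t := by linarith
  have ht1 : (0:ℝ) < t - 1 := by linarith
  induction Q with
  | zero =>
    simp only [Nat.cast_zero, zero_sub]
    rw [Finset.Icc_self, Finset.sum_singleton, zpow_neg_one, zpow_zero]
    rw [inv_le_iff_one_le_mul₀ ht0, div_mul_eq_mul_div, le_div_iff₀ ht1]
    linarith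
  | succ n ih =>
    have hins : Finset.Icc (-1:ℤ) (((n:ℕ):ℤ)+1-1)
        = insert ((n:ℤ)) (Finset.Icc (-1:ℤ) ((n:ℤ)-1)) := by
      push_cast
      rw [show (n:ℤ)+1-1 = (n:ℤ) by ring]
      ext x
      simp [Finset.mem_Icc, Finset.mem_insert]
      omega
    push_cast at hins ⊢
    rw [hins, Finset.sum_insert (by simp [Finset.mem_Icc])]
    have h2 : (0:ℝ) < t ^ (n:ℤ) := zpow_pos ht0 _
    have h4 : t ^ ((n:ℤ)+1) = t ^ (n:ℤ) * t := by rw [zpow_add_one₀ (ne_of_gt ht0)]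
    rw [h4]
    rw [div_eq_mul_inv] at ih ⊢
    have hinv : (0:ℝ) < (t-1)⁻¹ := by positivity
    have : t ^ (n:ℤ) + t ^ (n:ℤ) * (t-1) = t ^ (n:ℤ) * t := by ring
    nlinarith [ih, mul_pos h2 ht1, mul_inv_cancel₀ (ne_of_gt ht1)]

lemma caseA_aux (L r δ δb : ℝ) (hL : 1 ≤ L) (hr : 0 < r) (hδ0 : 0 < δ)
    (hδb1 : 2*δ+1 < δb) (Q : ℕ) (p : ℤ) (hp : (Q:ℤ) ≤ p) (x ap : ℝ)
    (hx : 0 < x) (hap : 0 ≤ ap)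
    (h : x ≤ (L * (2:ℝ)^(p - (Q:ℤ) + 1))^δ * ((2:ℝ)^p)^(3/r) * ap) :
    x^2 * ((2:ℝ)^(Q:ℤ))^(δb-1) ≤ (2*L)^(2*δ) * (((2:ℝ)^p)^(-1+δb+6/r) * ap^2) := by
  have h2 : (0:ℝ) < 2 := two_pos
  have hL0 : (0:ℝ) < L := by linarith
  have hz : ∀ k : ℤ, (2:ℝ) ^ k = (2:ℝ) ^ (k:ℝ) := fun k => (Real.rpow_intCast 2 k).symm
  have sqr : ∀ y e : ℝ, 0 < y → ((y:ℝ)^(e:ℝ))^2 = y^(2*e) := by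
    intro y e hy; rw [sq, ← Real.rpow_add hy, two_mul]
  set P := (p:ℝ) with hP
  set K := ((Q:ℕ):ℝ) with hK
  have hPK : K ≤ P := by rw [hP, hK]; exact_mod_cast hp
  have e1 : (L * (2:ℝ)^(p - (Q:ℤ) + 1))^δ = L^δ * (2:ℝ)^((P - K + 1)*δ) := by
    rw [hz, Real.mul_rpow (le_of_lt hL0) (by positivity),
      ← Real.rpow_mul (by norm_num)]
    push_cast
    rw [hP, hK]
  have e2 : ((2:ℝ)^p)^(3/r) = (2:ℝ)^(P*(3/r)) := by
    rw [hz, ← Real.rpow_mul (by norm_num)]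
  have e3 : ((2:ℝ)^(Q:ℤ))^(δb-1) = (2:ℝ)^(K*(δb-1)) := by
    rw [hz, ← Real.rpow_mul (by norm_num)]; push_cast; rw [hK]
  have e4 : ((2:ℝ)^p)^(-1+δb+6/r) = (2:ℝ)^(P*(-1+δb+6/r)) := by
    rw [hz, ← Real.rpow_mul (by norm_num)]
  have e5 : ((2:ℝ)*L)^(2*δ) = (2:ℝ)^(2*δ) * L^(2*δ) :=
    Real.mul_rpow (by norm_num) (le_of_lt hL0)
  rw [e1] at h
  rw [e3, e4, e5]
  set u := (P - K + 1)*δ with hu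
  set v := P*(3/r) with hv
  set R := L^δ * (2:ℝ)^u * (2:ℝ)^v * ap with hR
  rw [e2] at h
  have hR0 : 0 ≤ R := by positivity
  have hx2 : x^2 ≤ R^2 := by
    apply pow_le_pow_left₀ (le_of_lt hx) h
  set A := 2*u + 2*v + K*(δb-1) with hA
  have key : R^2 * (2:ℝ)^(K*(δb-1)) = L^(2*δ) * ap^2 * (2:ℝ)^A := by
    have : R^2 = (L^δ)^2 * ((2:ℝ)^u)^2 * ((2:ℝ)^v)^2 * ap^2 := by rw [hR]; ring
    rw [this, sqr L δ hL0, sqr 2 u h2, sqr 2 v h2, hA,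
      Real.rpow_add h2, Real.rpow_add h2]
    ring
  set B := 2*δ + P*(-1+δb+6/r) with hB
  have keyB : (2:ℝ)^(2*δ) * L^(2*δ) * ((2:ℝ)^(P*(-1+δb+6/r)) * ap^2)
      = L^(2*δ) * ap^2 * (2:ℝ)^B := by
    rw [hB, Real.rpow_add h2]; ring
  have hAB : A ≤ B := by
    have hprod : 0 ≤ (P - K) * (δb - 1 - 2*δ) :=
      mul_nonneg (by linarith) (by linarith)
    have hr6 : (6:ℝ)/r = 2*(3/r) := by ring
    rw [hA, hB, hu, hv, hr6]
    nlinarith [hprod]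
  calc x^2 * (2:ℝ)^(K*(δb-1)) ≤ R^2 * (2:ℝ)^(K*(δb-1)) := by
        apply mul_le_mul_of_nonneg_right hx2 (by positivity)
    _ = L^(2*δ) * ap^2 * (2:ℝ)^A := key
    _ ≤ L^(2*δ) * ap^2 * (2:ℝ)^B := by
        apply mul_le_mul_of_nonneg_left
          (Real.rpow_le_rpow_of_exponent_le one_le_two hAB) (by positivity)
    _ = _ := keyB.symm

lemma caseB_aux (r δb CB : ℝ) (hr : 0 < r) (hCB : 0 < CB)
    (hδb1 : 1 < δb) (hδb3 : δb < 3) (Q : ℕ) (a : ℤ → ℝ)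
    (ha : ∀ q : ℤ, -1 ≤ q → 0 ≤ a q) (x G : ℝ) (hx : 0 < x)
    (h : x ≤ ((2:ℝ)^((Q:ℤ)-1))⁻¹ * G)
    (hG : G ≤ CB * ∑ p ∈ Finset.Icc (-1:ℤ) ((Q:ℤ)-1), ((2:ℝ)^p)^(1+3/r) * a p) :
    x^2 * ((2:ℝ)^(Q:ℤ))^(δb-1) ≤
      (4*CB^2/((2:ℝ)^((3:ℝ)-δb) - 1)) *
        ∑ p ∈ Finset.Icc (-1:ℤ) ((Q:ℤ)-1), ((2:ℝ)^p)^(-1+δb+6/r) * (a p)^2 := by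
  have h2 : (0:ℝ) < 2 := two_pos
  have sqr : ∀ y e : ℝ, 0 < y → ((y:ℝ)^(e:ℝ))^2 = y^(2*e) := by
    intro y e hy; rw [sq, ← Real.rpow_add hy, two_mul]
  set K := ((Q:ℕ):ℝ) with hK
  set t := (2:ℝ)^((3:ℝ)-δb) with hmt
  have ht1 : 1 < t := by
    rw [hmt, show (1:ℝ) = (2:ℝ)^(0:ℝ) by rw [Real.rpow_zero]]
    exact Real.rpow_lt_rpow_of_exponent_lt one_lt_two (by linarith)
  have htpos : 0 < t - 1 := by linarith
  set s := Finset.Icc (-1:ℤ) ((Q:ℤ)-1) with hs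
  set f : ℤ → ℝ := fun p => ((2:ℝ)^p)^((3-δb)/2) with hf
  set g : ℤ → ℝ := fun p => ((2:ℝ)^p)^((δb-1)/2+3/r) * a p with hg
  have hb : ∀ p : ℤ, (0:ℝ) < (2:ℝ)^p := fun p => zpow_pos h2 p
  have hfg : ∀ p ∈ s, ((2:ℝ)^p)^(1+3/r) * a p = f p * g p := by
    intro p _
    rw [hf, hg]
    simp only
    rw [show (1+3/r : ℝ) = (3-δb)/2 + ((δb-1)/2+3/r) by ring,
      Real.rpow_add (hb p)]
    ring
  have hg2 : ∀ p ∈ s, (g p)^2 = ((2:ℝ)^p)^(-1+δb+6/r) * (a p)^2 := by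
    intro p _
    rw [hg]
    simp only
    rw [mul_pow, sqr _ _ (hb p), show 2*((δb-1)/2+3/r) = -1+δb+6/r by ring]
  have hf2 : ∀ p ∈ s, (f p)^2 = t ^ p := by
    intro p _
    rw [hf]
    simp only
    rw [sqr _ _ (hb p), hmt, ← Real.rpow_intCast 2 p,
      ← Real.rpow_intCast ((2:ℝ)^((3:ℝ)-δb)) p, ← Real.rpow_mul (le_of_lt h2),
      ← Real.rpow_mul (le_of_lt h2)]
    congr 1
    ring
  set S := ∑ p ∈ s, ((2:ℝ)^p)^(1+3/r) * a p with hS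
  set T := ∑ p ∈ s, ((2:ℝ)^p)^(-1+δb+6/r) * (a p)^2 with hT
  have hT0 : 0 ≤ T := Finset.sum_nonneg fun p _ => by positivity
  have hS0 : 0 ≤ S := by
    apply Finset.sum_nonneg
    intro p hp
    have : -1 ≤ p := (Finset.mem_Icc.mp hp).1
    have := ha p this
    positivity
  have hCS : S^2 ≤ (∑ p ∈ s, t ^ p) * T := by
    calc S^2 = (∑ p ∈ s, f p * g p)^2 := by rw [hS, Finset.sum_congr rfl hfg]
      _ ≤ (∑ p ∈ s, (f p)^2) * (∑ p ∈ s, (g p)^2) :=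
          Finset.sum_mul_sq_le_sq_mul_sq s f g
      _ = (∑ p ∈ s, t ^ p) * T := by
          rw [Finset.sum_congr rfl hf2, hT, Finset.sum_congr rfl hg2]
  have hU : (∑ p ∈ s, t ^ p) ≤ (2:ℝ)^(K*(3-δb)) / (t - 1) := by
    have := geom_aux t ht1 Q
    rw [hs]
    convert this using 2
    rw [hmt, ← Real.rpow_intCast ((2:ℝ)^((3:ℝ)-δb)) (Q:ℤ),
      ← Real.rpow_mul (le_of_lt h2)]
    congr 1
    push_cast
    ring
  -- x ≤ 2^(1-K) * (CB * S)
  have hinv : ((2:ℝ)^((Q:ℤ)-1))⁻¹ = (2:ℝ)^((1:ℝ)-K) := by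
    rw [← Real.rpow_intCast 2 ((Q:ℤ)-1), ← Real.rpow_neg (le_of_lt h2)]
    congr 1
    push_cast
    ring
  have hx1 : x ≤ (2:ℝ)^((1:ℝ)-K) * (CB * S) := by
    calc x ≤ ((2:ℝ)^((Q:ℤ)-1))⁻¹ * G := h
      _ ≤ ((2:ℝ)^((Q:ℤ)-1))⁻¹ * (CB * S) := by
          apply mul_le_mul_of_nonneg_left hG (by positivity)
      _ = (2:ℝ)^((1:ℝ)-K) * (CB * S) := by rw [hinv]
  have hx2 : x^2 ≤ (2:ℝ)^((2:ℝ)-2*K) * CB^2 * S^2 := by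
    calc x^2 ≤ ((2:ℝ)^((1:ℝ)-K) * (CB * S))^2 := pow_le_pow_left₀ (le_of_lt hx) hx1 2
      _ = ((2:ℝ)^((1:ℝ)-K))^2 * CB^2 * S^2 := by ring
      _ = (2:ℝ)^((2:ℝ)-2*K) * CB^2 * S^2 := by
          rw [sqr _ _ (by positivity), show 2*((1:ℝ)-K) = (2:ℝ)-2*K by ring]
  have e3 : ((2:ℝ)^(Q:ℤ))^(δb-1) = (2:ℝ)^(K*(δb-1)) := by
    rw [← Real.rpow_intCast 2 (Q:ℤ), ← Real.rpow_mul (le_of_lt h2)]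
    congr 1
  rw [e3]
  have hpow4 : (2:ℝ)^((2:ℝ)-2*K) * (2:ℝ)^(K*(3-δb)) * (2:ℝ)^(K*(δb-1)) = 4 := by
    rw [← Real.rpow_add h2, ← Real.rpow_add h2,
      show ((2:ℝ)-2*K) + K*(3-δb) + K*(δb-1) = 2 by ring]
    have := Real.rpow_natCast (2:ℝ) 2
    norm_num at this
    linarith
  calc x^2 * (2:ℝ)^(K*(δb-1))
      ≤ ((2:ℝ)^((2:ℝ)-2*K) * CB^2 * S^2) * (2:ℝ)^(K*(δb-1)) := by
        apply mul_le_mul_of_nonneg_right hx2 (by positivity)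
    _ ≤ ((2:ℝ)^((2:ℝ)-2*K) * CB^2 * (((2:ℝ)^(K*(3-δb)) / (t - 1)) * T)) * (2:ℝ)^(K*(δb-1)) := by
        apply mul_le_mul_of_nonneg_right _ (by positivity)
        apply mul_le_mul_of_nonneg_left _ (by positivity)
        calc S^2 ≤ (∑ p ∈ s, t ^ p) * T := hCS
          _ ≤ ((2:ℝ)^(K*(3-δb)) / (t - 1)) * T :=
              mul_le_mul_of_nonneg_right hU hT0
    _ = (4*CB^2/(t - 1)) * T := by
        rw [← hpow4]
        field_simp


/-- pointwise bound on the magnetic determining wavenumber. Assume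
`0 < δ < 1` and `2δ+1 < δ_b < 3`. There is a constant `C` depending only on
`L, r, δ, δ_b, C_B` such that whenever `Λ_b < ∞`,
`(cμ)² max(Λ_b - 1, 0)^{δ_b-1} ≤ C Σ_{q ≥ -1} λ_q^{-1+δ_b+6/r} a_q²`. -/
theorem pointwise_magnetic_wavenumber_bound
    (L r δ δb CB : ℝ) (hL : 1 ≤ L) (hr : 0 < r) (hCB : 0 < CB)
    (hδ0 : 0 < δ) (hδ1 : δ < 1) (hδb1 : 2 * δ + 1 < δb) (hδb3 : δb < 3) :
    ∃ C : ℝ, 0 < C ∧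
      ∀ (c μ : ℝ) (a G : ℤ → ℝ), 0 < c → 0 < μ →
        (∀ q : ℤ, -1 ≤ q → 0 ≤ a q) →
        (∀ q : ℤ, -1 ≤ q → 0 ≤ G q) →
        (∀ q : ℤ, -1 ≤ q →
          G q ≤ CB * ∑ p ∈ Finset.Icc (-1 : ℤ) q, ((2:ℝ) ^ p) ^ (1 + 3 / r) * a p) →
        LambdaB L c μ r δ a G ≠ ⊤ →
        ENNReal.ofReal
            ((c * μ) ^ 2 * max ((LambdaB L c μ r δ a G).toReal - 1) 0 ^ (δb - 1)) ≤
          ENNReal.ofReal C *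
            ∑' n : ℕ,
              ENNReal.ofReal
                (((2:ℝ) ^ ((n : ℤ) - 1)) ^ (-1 + δb + 6 / r) * a ((n : ℤ) - 1) ^ 2) := by
    classical
  have hC1 : (0:ℝ) < (2*L)^(2*δ) := Real.rpow_pos_of_pos (by linarith) _
  have ht1 : (1:ℝ) < (2:ℝ)^((3:ℝ)-δb) := by
    rw [show (1:ℝ) = (2:ℝ)^(0:ℝ) by rw [Real.rpow_zero]]
    exact Real.rpow_lt_rpow_of_exponent_lt one_lt_two (by linarith)
  have hC2 : (0:ℝ) < 4*CB^2/((2:ℝ)^((3:ℝ)-δb) - 1) := by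
    apply div_pos (by positivity) (by linarith)
  refine ⟨max ((2*L)^(2*δ)) (4*CB^2/((2:ℝ)^((3:ℝ)-δb) - 1)),
    lt_max_of_lt_left hC1, ?_⟩
  set C := max ((2*L)^(2*δ)) (4*CB^2/((2:ℝ)^((3:ℝ)-δb) - 1)) with hCdef
  have hC0 : 0 < C := lt_max_of_lt_left hC1
  intro c μ a G hc hμ ha hGnn hBern hfin
  have hex : ∃ q : ℕ, GoodB L c μ r δ a G q := by
    by_contra hne
    push_neg at hne
    apply hfin
    rw [LambdaB, show {x : ℝ≥0∞ | ∃ q : ℕ, GoodB L c μ r δ a G q ∧ x = 2 ^ q} = ∅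
      from Set.eq_empty_iff_forall_notMem.2 (by rintro x ⟨q, hq, _⟩; exact hne q hq)]
    exact sInf_empty
  set Q := Nat.find hex with hQdef
  have hQgood : GoodB L c μ r δ a G Q := Nat.find_spec hex
  have hLam : LambdaB L c μ r δ a G = 2^Q := by
    apply le_antisymm
    · exact sInf_le ⟨Q, hQgood, rfl⟩
    · apply le_sInf
      rintro x ⟨q, hq, rfl⟩
      exact pow_le_pow_right₀ one_le_two (Nat.find_min' hex hq)
  have htoReal : (LambdaB L c μ r δ a G).toReal = (2:ℝ)^Q := by
    rw [hLam]
    simp [ENNReal.toReal_pow]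
  rcases Nat.eq_zero_or_pos Q with hQ0 | hQ1
  · rw [htoReal, hQ0, pow_zero,
      show (1:ℝ)-1 = 0 by ring, max_self,
      Real.zero_rpow (by linarith : δb - 1 ≠ 0), mul_zero, ENNReal.ofReal_zero]
    exact zero_le
  · have hnot : ¬ GoodB L c μ r δ a G (Q-1) := Nat.find_min hex (by omega)
    have hcast : (((Q-1:ℕ)):ℤ) = (Q:ℤ) - 1 := by push_cast [hQ1]; ring
    rw [GoodB, not_and_or, hcast] at hnot
    have h2Q1 : (1:ℝ) ≤ 2^Q := one_le_pow₀ one_le_two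
    have hmax : max ((2:ℝ)^Q - 1) 0 = (2:ℝ)^Q - 1 := max_eq_left (by linarith)
    have hmono : ((2:ℝ)^Q - 1)^(δb-1) ≤ ((2:ℝ)^(Q:ℤ))^(δb-1) := by
      rw [zpow_natCast]
      exact Real.rpow_le_rpow (by linarith) (by linarith) (by linarith)
    have hM : (c*μ)^2 * max ((2:ℝ)^Q - 1) 0 ^ (δb-1)
        ≤ (c*μ)^2 * ((2:ℝ)^(Q:ℤ))^(δb-1) := by
      rw [hmax]; exact mul_le_mul_of_nonneg_left hmono (by positivity)
    rw [htoReal]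
    have hcμ0 : 0 < c*μ := mul_pos hc hμ
    rcases hnot with hA | hB
    · push_neg at hA
      obtain ⟨p, hp1, hp2⟩ := hA
      have hpQ : (Q:ℤ) ≤ p := by omega
      have hp1' : (-1:ℤ) ≤ p := by omega
      rw [show p - ((Q:ℤ)-1) = p - (Q:ℤ) + 1 by ring] at hp2
      have hkey := caseA_aux L r δ δb hL hr hδ0 hδb1 Q p hpQ (c*μ) (a p)
        hcμ0 (ha p hp1') hp2
      have hreal : (c*μ)^2 * max ((2:ℝ)^Q - 1) 0 ^ (δb-1)
          ≤ C * (((2:ℝ)^p)^(-1+δb+6/r) * (a p)^2) := by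
        calc _ ≤ (c*μ)^2 * ((2:ℝ)^(Q:ℤ))^(δb-1) := hM
          _ ≤ (2*L)^(2*δ) * (((2:ℝ)^p)^(-1+δb+6/r) * (a p)^2) := hkey
          _ ≤ C * (((2:ℝ)^p)^(-1+δb+6/r) * (a p)^2) :=
              mul_le_mul_of_nonneg_right (le_max_left _ _) (by positivity)
      have hnp : (((p+1).toNat:ℕ):ℤ) - 1 = p := by omega
      calc ENNReal.ofReal ((c*μ)^2 * max ((2:ℝ)^Q-1) 0 ^ (δb-1))
          ≤ ENNReal.ofReal (C * (((2:ℝ)^p)^(-1+δb+6/r) * (a p)^2)) :=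
            ENNReal.ofReal_le_ofReal hreal
        _ = ENNReal.ofReal C * ENNReal.ofReal (((2:ℝ)^p)^(-1+δb+6/r) * (a p)^2) :=
            ENNReal.ofReal_mul (le_of_lt hC0)
        _ ≤ _ := by
            apply mul_le_mul_right
            have h := ENNReal.le_tsum (f := fun n : ℕ =>
              ENNReal.ofReal (((2:ℝ)^((n:ℤ)-1))^(-1+δb+6/r) * a ((n:ℤ)-1)^2)) (p+1).toNat
            simp only [hnp] at h
            exact h
    · push_neg at hB
      have hBern' := hBern ((Q:ℤ)-1) (by omega)
      have hkey := caseB_aux r δb CB hr hCB (by linarith) hδb3 Q a ha (c*μ)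
        (G ((Q:ℤ)-1)) hcμ0 hB hBern'
      set T := ∑ p ∈ Finset.Icc (-1:ℤ) ((Q:ℤ)-1), ((2:ℝ)^p)^(-1+δb+6/r) * (a p)^2 with hT
      have hT0 : 0 ≤ T := Finset.sum_nonneg fun p _ => by positivity
      have hreal : (c*μ)^2 * max ((2:ℝ)^Q - 1) 0 ^ (δb-1) ≤ C * T :=
        calc _ ≤ (c*μ)^2 * ((2:ℝ)^(Q:ℤ))^(δb-1) := hM
          _ ≤ (4*CB^2/((2:ℝ)^((3:ℝ)-δb)-1)) * T := hkey
          _ ≤ C * T := mul_le_mul_of_nonneg_right (le_max_right _ _) hT0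
      calc ENNReal.ofReal ((c*μ)^2 * max ((2:ℝ)^Q-1) 0 ^ (δb-1))
          ≤ ENNReal.ofReal (C * T) := ENNReal.ofReal_le_ofReal hreal
        _ = ENNReal.ofReal C * ENNReal.ofReal T := ENNReal.ofReal_mul (le_of_lt hC0)
        _ ≤ _ := by
            apply mul_le_mul_right
            rw [hT, ENNReal.ofReal_sum_of_nonneg (fun p _ => by positivity)]
            have himg : Finset.Icc (-1:ℤ) ((Q:ℤ)-1)
                = (Finset.range (Q+1)).image (fun n : ℕ => (n:ℤ)-1) := by
              ext x
              simp only [Finset.mem_Icc, Finset.mem_image, Finset.mem_range]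
              constructor
              · intro hx; exact ⟨(x+1).toNat, by omega, by omega⟩
              · rintro ⟨m, hm, rfl⟩; omega
            rw [himg, Finset.sum_image (by intro x _ y _ hxy; simp only at hxy; omega)]
            exact ENNReal.sum_le_tsum _
end

section
/- Assume δ ≥ 0 and 2δ+1 < δ_b < 3. If Σ_{q≥−1} λ_q^{−1+δ_b+6/r} a_q² < ∞, then the set of natural numbers q such that (L λ_{p−q})^δ λ_p^{3/r} a_p < c μ for all integers p > q and λ_q^{−1} G_q < c μ is nonempty; that is, Λ_b < ∞. -/
open scoped ENNReal
open Filter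

open Filter in
lemma aux_tendsto {x : ℝ} (hx : |x| < 1) :
    Tendsto (fun q : ℕ => ((q : ℝ) + 2) * x ^ q) atTop (nhds 0) := by
  have h1 : Tendsto (fun q : ℕ => (q : ℝ) ^ 1 * x ^ q) atTop (nhds 0) :=
    (summable_pow_mul_geometric_of_norm_lt_one (R := ℝ) 1 (r := x) (by rwa [Real.norm_eq_abs])).tendsto_atTop_zero
  have h2 : Tendsto (fun q : ℕ => (2 : ℝ) * x ^ q) atTop (nhds 0) := by
    simpa using (tendsto_pow_atTop_nhds_zero_of_norm_lt_one
      (by rwa [Real.norm_eq_abs] : ‖x‖ < 1)).const_mul (2:ℝ)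
  have := h1.add h2
  simp only [add_zero] at this
  exact this.congr fun q => by ring


/-- if `δ ≥ 0`, `2δ+1 < δ_b < 3`, and the weighted sum
`Σ_{q ≥ -1} λ_q^{-1+δ_b+6/r} a_q²` is finite, then some natural number `q` satisfies both
conditions in the definition of the magnetic determining wavenumber; that is, `Λ_b < ∞`. -/
theorem magnetic_wavenumber_finite
    (L r c μ δ δb CB : ℝ) (hL : 1 ≤ L) (hr : 0 < r) (hc : 0 < c) (hμ : 0 < μ)
    (hδ : 0 ≤ δ) (hδb1 : 2 * δ + 1 < δb) (hδb3 : δb < 3) (hCB : 0 < CB)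
    (a G : ℤ → ℝ)
    (ha0 : ∀ q : ℤ, -1 ≤ q → 0 ≤ a q)
    (hG0 : ∀ q : ℤ, -1 ≤ q → 0 ≤ G q)
    (hBern : ∀ q : ℤ, -1 ≤ q →
      G q ≤ CB * ∑ p ∈ Finset.Icc (-1 : ℤ) q, ((2:ℝ) ^ p) ^ (1 + 3 / r) * a p)
    (hS : (∑' n : ℕ,
        ENNReal.ofReal
          (((2:ℝ) ^ ((n : ℤ) - 1)) ^ (-1 + δb + 6 / r) * a ((n : ℤ) - 1) ^ 2)) ≠ ⊤) :
    (∃ q : ℕ, GoodB L c μ r δ a G q) ∧ LambdaB L c μ r δ a G ≠ ⊤ := by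
  have h2 : (0:ℝ) < 2 := two_pos
  have hpow : ∀ p : ℤ, (0:ℝ) < (2:ℝ) ^ p := fun p => zpow_pos two_pos p
  set σ : ℝ := -1 + δb + 6 / r with hσdef
  set η : ℝ := (1 - δb) / 2 with hηdef
  set β : ℝ := (3 - δb) / 2 with hβdef
  have hη0 : η < 0 := by rw [hηdef]; nlinarith
  have hβ0 : 0 < β := by rw [hβdef]; linarith
  have hβ1 : β < 1 := by rw [hβdef]; nlinarith
  have hκ : δ + η < 0 := by rw [hηdef]; linarith
  have hLδ : (0:ℝ) < L ^ δ := Real.rpow_pos_of_pos (by linarith) δ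
  set ε : ℝ := c * μ / (2 * L ^ δ) with hεdef
  have hε : 0 < ε := by positivity
  -- Summability of the real series
  have hsum : Summable (fun n : ℕ => ((2:ℝ) ^ ((n:ℤ)-1)) ^ σ * a ((n:ℤ)-1) ^ 2) := by
    have h := ENNReal.summable_toReal hS
    refine h.congr fun n => ?_
    exact ENNReal.toReal_ofReal (by positivity)
  have htend := hsum.tendsto_atTop_zero
  obtain ⟨N, hN⟩ := eventually_atTop.mp (htend.eventually_lt_const (by positivity : (0:ℝ) < ε ^ 2))
  -- tail bound on a
  have htail : ∀ p : ℤ, (N:ℤ) ≤ p → a p < ε * ((2:ℝ) ^ p) ^ (-(σ/2)) := by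
    intro p hp
    have hp1 : (-1:ℤ) ≤ p := le_trans (by omega) hp
    have hnat : (((p+1).toNat : ℤ)) - 1 = p := by omega
    have hge : N ≤ (p+1).toNat := by omega
    have h1 := hN _ hge
    rw [hnat] at h1
    have hx : (0:ℝ) < ((2:ℝ) ^ p) ^ σ := Real.rpow_pos_of_pos (hpow p) σ
    have hsq : a p ^ 2 < (ε * ((2:ℝ) ^ p) ^ (-(σ/2))) ^ 2 := by
      have heq : (ε * ((2:ℝ) ^ p) ^ (-(σ/2))) ^ 2 = ε ^ 2 * ((2:ℝ) ^ p) ^ (-σ) := by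
        rw [mul_pow, ← Real.rpow_natCast (((2:ℝ) ^ p) ^ (-(σ/2))) 2,
          ← Real.rpow_mul (le_of_lt (hpow p))]
        norm_num
      rw [heq, Real.rpow_neg (le_of_lt (hpow p)), ← div_eq_mul_inv, lt_div_iff₀ hx, mul_comm]
      exact h1
    exact lt_of_pow_lt_pow_left₀ 2 (by positivity) hsq
  -- the exponent identity 3/r - σ/2 = η
  have hexp1 : 3 / r + (-(σ/2)) = η := by
    rw [hσdef, hηdef]; field_simp; ring
  -- condition (1) holds for every q ≥ N
  have hcond1 : ∀ q : ℕ, N ≤ q → ∀ p : ℤ, (q:ℤ) < p →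
      (L * (2:ℝ) ^ (p - (q:ℤ))) ^ δ * ((2:ℝ) ^ p) ^ (3 / r) * a p < c * μ := by
    intro q hq p hp
    have hpN : (N:ℤ) ≤ p := by exact_mod_cast le_trans (by exact_mod_cast hq) (le_of_lt hp)
    have ha := htail p hpN
    have hLpos : (0:ℝ) < L * (2:ℝ) ^ (p - (q:ℤ)) := by positivity
    have hfac : (0:ℝ) < (L * (2:ℝ) ^ (p - (q:ℤ))) ^ δ * ((2:ℝ) ^ p) ^ (3 / r) := by
      exact mul_pos (Real.rpow_pos_of_pos hLpos δ) (Real.rpow_pos_of_pos (hpow p) _)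
    calc (L * (2:ℝ) ^ (p - (q:ℤ))) ^ δ * ((2:ℝ) ^ p) ^ (3 / r) * a p
        < (L * (2:ℝ) ^ (p - (q:ℤ))) ^ δ * ((2:ℝ) ^ p) ^ (3 / r) *
            (ε * ((2:ℝ) ^ p) ^ (-(σ/2))) := by
          exact (mul_lt_mul_iff_right₀ hfac).mpr ha
      _ ≤ L ^ δ * ε := by
          have h2p : ∀ m : ℤ, ((2:ℝ) ^ m : ℝ) = (2:ℝ) ^ (m:ℝ) := fun m =>
            (Real.rpow_intCast 2 m).symm
          have hmul : (L * (2:ℝ) ^ (p - (q:ℤ))) ^ δ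
              = L ^ δ * ((2:ℝ) ^ (((p - (q:ℤ)):ℝ) * δ)) := by
            rw [Real.mul_rpow (by linarith) (le_of_lt (hpow _)), h2p,
              ← Real.rpow_mul (by norm_num)]
            push_cast
            ring_nf
          rw [hmul, h2p p, ← Real.rpow_mul (by norm_num : (0:ℝ) ≤ 2),
            ← Real.rpow_mul (by norm_num : (0:ℝ) ≤ 2)]
          have hE : (2:ℝ) ^ (((p - (q:ℤ)):ℝ) * δ) * ((2:ℝ) ^ ((p:ℝ) * (3/r))) *
              ((2:ℝ) ^ ((p:ℝ) * (-(σ/2)))) =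
              (2:ℝ) ^ (((p - (q:ℤ)):ℝ) * δ + (p:ℝ) * (3/r) + (p:ℝ) * (-(σ/2))) := by
            rw [← Real.rpow_add h2, ← Real.rpow_add h2]
          have hEle : ((p - (q:ℤ)):ℝ) * δ + (p:ℝ) * (3/r) + (p:ℝ) * (-(σ/2)) ≤ 0 := by
            have hq0 : (0:ℝ) ≤ (q:ℝ) := Nat.cast_nonneg q
            have hp1 : (1:ℝ) ≤ (p:ℝ) := by exact_mod_cast by omega
            have h1 : (p:ℝ) * (3/r) + (p:ℝ) * (-(σ/2)) = (p:ℝ) * η := by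
              rw [← mul_add, hexp1]
            push_cast
            rw [add_assoc, h1]
            nlinarith [mul_nonneg hq0 hδ]
          calc L ^ δ * ((2:ℝ) ^ (((p - (q:ℤ)):ℝ) * δ)) * ((2:ℝ) ^ ((p:ℝ) * (3/r))) *
                (ε * ((2:ℝ) ^ ((p:ℝ) * (-(σ/2)))))
              = L ^ δ * ε * ((2:ℝ) ^ (((p - (q:ℤ)):ℝ) * δ) * ((2:ℝ) ^ ((p:ℝ) * (3/r))) *
                  ((2:ℝ) ^ ((p:ℝ) * (-(σ/2))))) := by ring
            _ ≤ L ^ δ * ε * 1 := by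
                refine mul_le_mul_of_nonneg_left ?_ (by positivity)
                rw [hE]
                exact Real.rpow_le_one_of_one_le_of_nonpos one_le_two hEle
            _ = L ^ δ * ε := mul_one _
      _ = c * μ / 2 := by rw [hεdef]; field_simp
      _ < c * μ := by linarith [mul_pos hc hμ]
  -- the constant K
  set K : ℝ := ∑ p ∈ Finset.Icc (-1:ℤ) (N:ℤ), ((2:ℝ) ^ p) ^ (1 + 3/r) * a p with hKdef
  have hKterm : ∀ p ∈ Finset.Icc (-1:ℤ) (N:ℤ), (0:ℝ) ≤ ((2:ℝ) ^ p) ^ (1 + 3/r) * a p := by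
    intro p hp
    rw [Finset.mem_Icc] at hp
    exact mul_nonneg (le_of_lt (Real.rpow_pos_of_pos (hpow p) _)) (ha0 p hp.1)
  have hK0 : 0 ≤ K := Finset.sum_nonneg hKterm
  -- bound on G q / 2^q for q ≥ N
  have hexp2 : 1 + 3/r + (-(σ/2)) = β := by rw [hσdef, hβdef]; field_simp; ring
  have hGbound : ∀ q : ℕ, N ≤ q → ((2:ℝ) ^ (q:ℤ))⁻¹ * G q ≤
      CB * (((q:ℝ) + 2) * (K + ε * ((2:ℝ) ^ (q:ℤ)) ^ β)) * ((2:ℝ) ^ (q:ℤ))⁻¹ := by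
    intro q hq
    have hq1 : (-1:ℤ) ≤ (q:ℤ) := by omega
    have hsumle : ∑ p ∈ Finset.Icc (-1:ℤ) (q:ℤ), ((2:ℝ) ^ p) ^ (1 + 3/r) * a p ≤
        ((q:ℝ) + 2) * (K + ε * ((2:ℝ) ^ (q:ℤ)) ^ β) := by
      have hcard : ((Finset.Icc (-1:ℤ) (q:ℤ)).card : ℝ) = (q:ℝ) + 2 := by
        have : (Finset.Icc (-1:ℤ) (q:ℤ)).card = q + 2 := by rw [Int.card_Icc]; omega
        rw [this]; push_cast; ring
      have := Finset.sum_le_card_nsmul (Finset.Icc (-1:ℤ) (q:ℤ))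
        (fun p => ((2:ℝ) ^ p) ^ (1 + 3/r) * a p) (K + ε * ((2:ℝ) ^ (q:ℤ)) ^ β) ?_
      · rw [nsmul_eq_mul, hcard] at this; exact this
      intro p hp
      rw [Finset.mem_Icc] at hp
      have hεq : 0 ≤ ε * ((2:ℝ) ^ (q:ℤ)) ^ β := by positivity
      rcases le_or_gt p (N:ℤ) with hpN | hpN
      · have : ((2:ℝ) ^ p) ^ (1 + 3/r) * a p ≤ K :=
          Finset.single_le_sum hKterm (Finset.mem_Icc.mpr ⟨hp.1, hpN⟩)
        linarith
      · have ha := htail p (le_of_lt hpN)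
        have hfac : (0:ℝ) < ((2:ℝ) ^ p) ^ (1 + 3/r) := Real.rpow_pos_of_pos (hpow p) _
        have h1 : ((2:ℝ) ^ p) ^ (1 + 3/r) * a p ≤
            ((2:ℝ) ^ p) ^ (1 + 3/r) * (ε * ((2:ℝ) ^ p) ^ (-(σ/2))) :=
          le_of_lt ((mul_lt_mul_iff_right₀ hfac).mpr ha)
        have h2' : ((2:ℝ) ^ p) ^ (1 + 3/r) * (ε * ((2:ℝ) ^ p) ^ (-(σ/2))) =
            ε * ((2:ℝ) ^ p) ^ β := by
          rw [mul_comm, mul_assoc, ← Real.rpow_add (hpow p), add_comm (-(σ/2)), hexp2]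
        have h3 : ((2:ℝ) ^ p) ^ β ≤ ((2:ℝ) ^ (q:ℤ)) ^ β := by
          refine Real.rpow_le_rpow (le_of_lt (hpow p)) ?_ (le_of_lt hβ0)
          exact zpow_le_zpow_right₀ one_le_two hp.2
        have : ((2:ℝ) ^ p) ^ (1 + 3/r) * a p ≤ ε * ((2:ℝ) ^ (q:ℤ)) ^ β := by
          rw [h2'] at h1
          exact le_trans h1 (mul_le_mul_of_nonneg_left h3 (le_of_lt hε))
        linarith
    have hGq := hBern (q:ℤ) hq1
    have hinv : (0:ℝ) ≤ ((2:ℝ) ^ (q:ℤ))⁻¹ := by positivity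
    calc ((2:ℝ) ^ (q:ℤ))⁻¹ * G q ≤ ((2:ℝ) ^ (q:ℤ))⁻¹ *
          (CB * (((q:ℝ) + 2) * (K + ε * ((2:ℝ) ^ (q:ℤ)) ^ β))) := by
          refine mul_le_mul_of_nonneg_left (le_trans hGq ?_) hinv
          exact mul_le_mul_of_nonneg_left hsumle (le_of_lt hCB)
      _ = CB * (((q:ℝ) + 2) * (K + ε * ((2:ℝ) ^ (q:ℤ)) ^ β)) * ((2:ℝ) ^ (q:ℤ))⁻¹ := by ring
  -- the bounding function tends to 0
  have hrw : ∀ q : ℕ, CB * (((q:ℝ) + 2) * (K + ε * ((2:ℝ) ^ (q:ℤ)) ^ β)) * ((2:ℝ) ^ (q:ℤ))⁻¹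
      = CB * K * (((q:ℝ) + 2) * ((2:ℝ)⁻¹) ^ q)
        + CB * ε * (((q:ℝ) + 2) * ((2:ℝ) ^ (β - 1)) ^ q) := by
    intro q
    have h2q : ((2:ℝ) ^ (q:ℤ)) = (2:ℝ) ^ (q:ℕ) := zpow_natCast 2 q
    have hβq : ((2:ℝ) ^ (q:ℤ)) ^ β = ((2:ℝ) ^ β) ^ (q:ℕ) := by
      rw [h2q, ← Real.rpow_natCast (2:ℝ) q, ← Real.rpow_mul (by norm_num),
        mul_comm, Real.rpow_mul (by norm_num), Real.rpow_natCast]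
    have hβ1q : ((2:ℝ) ^ (β - 1)) ^ (q:ℕ) = ((2:ℝ) ^ β) ^ (q:ℕ) * ((2:ℝ)⁻¹) ^ q := by
      rw [← mul_pow]
      congr 1
      rw [Real.rpow_sub h2, Real.rpow_one, div_eq_mul_inv]
    rw [hβq, h2q, hβ1q, ← inv_pow]
    ring
  have htend2 : Tendsto (fun q : ℕ =>
      CB * K * (((q:ℝ) + 2) * ((2:ℝ)⁻¹) ^ q)
        + CB * ε * (((q:ℝ) + 2) * ((2:ℝ) ^ (β - 1)) ^ q)) atTop (nhds 0) := by
    have t1 := (aux_tendsto (x := (2:ℝ)⁻¹) (by rw [abs_of_pos]; norm_num; norm_num)).const_mul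
      (CB * K)
    have hb1 : |(2:ℝ) ^ (β - 1)| < 1 := by
      rw [abs_of_pos (Real.rpow_pos_of_pos h2 _)]
      exact Real.rpow_lt_one_of_one_lt_of_neg one_lt_two (by linarith)
    have t2 := (aux_tendsto hb1).const_mul (CB * ε)
    simpa using t1.add t2
  obtain ⟨q, hqN, hqlt⟩ : ∃ q : ℕ, N ≤ q ∧
      CB * (((q:ℝ) + 2) * (K + ε * ((2:ℝ) ^ (q:ℤ)) ^ β)) * ((2:ℝ) ^ (q:ℤ))⁻¹ < c * μ := by
    have hev : ∀ᶠ q : ℕ in atTop,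
        CB * K * (((q:ℝ) + 2) * ((2:ℝ)⁻¹) ^ q)
          + CB * ε * (((q:ℝ) + 2) * ((2:ℝ) ^ (β - 1)) ^ q) < c * μ :=
      htend2.eventually_lt_const (by positivity)
    obtain ⟨M, hM⟩ := eventually_atTop.mp hev
    refine ⟨max N M, le_max_left _ _, ?_⟩
    rw [hrw]
    exact hM _ (le_max_right _ _)
  have hgood : GoodB L c μ r δ a G q :=
    ⟨hcond1 q hqN, lt_of_le_of_lt (hGbound q hqN) hqlt⟩
  refine ⟨⟨q, hgood⟩, ?_⟩
  have hmem : (2:ℝ≥0∞) ^ q ∈ {x : ℝ≥0∞ | ∃ q' : ℕ, GoodB L c μ r δ a G q' ∧ x = 2 ^ q'} :=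
    ⟨q, hgood, rfl⟩
  have hle : LambdaB L c μ r δ a G ≤ (2:ℝ≥0∞) ^ q := sInf_le hmem
  exact ne_top_of_le_ne_top (ENNReal.pow_ne_top ENNReal.ofNat_ne_top) hle
end

section
/- Let r > 0 and δ_b < 3 be real numbers, and let a : {q ∈ ℤ : q ≥ −1} → [0,∞) satisfy S := Σ_{q≥−1} λ_q^{−1+δ_b+6/r} a_q² < ∞. Then for every integer q ≥ −1: λ_q^{−1} · Σ_{p=−1}^{q} λ_p^{1+3/r} a_p ≤ (1 − 2^{(δ_b−3)/2})^{−1} · λ_q^{(1−δ_b)/2} · √S. In particular, if δ_b > 1 then the left-hand side tends to 0 as q → ∞. -/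
open Filter Topology

/-- low-frequency decay estimate for the magnetic field (`λ_q = 2^q`):
if `S = Σ_{q ≥ -1} λ_q^{-1+δ_b+6/r} a_q²` is finite, then for every `q ≥ -1`,
`λ_q^{-1} Σ_{p=-1}^{q} λ_p^{1+3/r} a_p ≤ (1-2^{(δ_b-3)/2})^{-1} λ_q^{(1-δ_b)/2} √S`;
in particular, if `δ_b > 1` then the left-hand side tends to `0` as `q → ∞`. -/
theorem magnetic_lowFreq_decay
    (r δb : ℝ) (hr : 0 < r) (hδb : δb < 3)
    (a : ℤ → ℝ) (ha0 : ∀ q : ℤ, -1 ≤ q → 0 ≤ a q)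
    (hS : Summable fun n : ℕ =>
      ((2:ℝ) ^ ((n:ℤ) - 1)) ^ (-1 + δb + 6 / r) * a ((n:ℤ) - 1) ^ 2) :
    (∀ q : ℤ, -1 ≤ q →
        ((2:ℝ) ^ q)⁻¹ * ∑ p ∈ Finset.Icc (-1 : ℤ) q, ((2:ℝ) ^ p) ^ (1 + 3 / r) * a p ≤
          (1 - (2:ℝ) ^ ((δb - 3) / 2))⁻¹ * ((2:ℝ) ^ q) ^ ((1 - δb) / 2) *
            Real.sqrt (∑' n : ℕ,
              ((2:ℝ) ^ ((n:ℤ) - 1)) ^ (-1 + δb + 6 / r) * a ((n:ℤ) - 1) ^ 2)) ∧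
      (1 < δb →
        Tendsto
          (fun q : ℤ =>
            ((2:ℝ) ^ q)⁻¹ * ∑ p ∈ Finset.Icc (-1 : ℤ) q, ((2:ℝ) ^ p) ^ (1 + 3 / r) * a p)
          atTop (𝓝 0)) := by
  have two_pos : (0:ℝ) < 2 := by norm_num
  set β : ℝ := (3 - δb) / 2 with hβdef
  have hβpos : 0 < β := by simp only [hβdef]; linarith
  set ρ : ℝ := (2:ℝ) ^ ((δb - 3) / 2) with hρdef
  have hρpos : 0 < ρ := Real.rpow_pos_of_pos two_pos _
  have hρlt : ρ < 1 := Real.rpow_lt_one_of_one_lt_of_neg (by norm_num) (by linarith)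
  have h1ρ : 0 < 1 - ρ := by linarith
  set S : ℝ := ∑' n : ℕ,
      ((2:ℝ) ^ ((n:ℤ) - 1)) ^ (-1 + δb + 6 / r) * a ((n:ℤ) - 1) ^ 2 with hSdef
  have hnonneg : ∀ n : ℕ, 0 ≤ ((2:ℝ) ^ ((n:ℤ) - 1)) ^ (-1 + δb + 6 / r) * a ((n:ℤ) - 1) ^ 2 := by
    intro n
    have := Real.rpow_pos_of_pos (zpow_pos two_pos ((n:ℤ) - 1)) (-1 + δb + 6 / r)
    positivity
  have hS0 : 0 ≤ S := tsum_nonneg hnonneg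
  -- each term of the series is at most S
  have hterm_le_S : ∀ p : ℤ, -1 ≤ p →
      ((2:ℝ) ^ p) ^ (-1 + δb + 6 / r) * a p ^ 2 ≤ S := by
    intro p hp
    have hn : ((p + 1).toNat : ℤ) - 1 = p := by omega
    have := Summable.le_tsum hS (p + 1).toNat (fun i _ => hnonneg i)
    rwa [hn] at this
  -- per-term bound : λ_p^{1+3/r} a_p ≤ 2^(pβ) √S
  have hterm : ∀ p : ℤ, -1 ≤ p →
      ((2:ℝ) ^ p) ^ (1 + 3 / r) * a p ≤ (2:ℝ) ^ ((p:ℝ) * β) * Real.sqrt S := by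
    intro p hp
    have hBpos : (0:ℝ) < (2:ℝ) ^ ((p:ℝ) * β) := Real.rpow_pos_of_pos two_pos _
    rw [mul_comm ((2:ℝ) ^ ((p:ℝ) * β)) (Real.sqrt S), ← div_le_iff₀ hBpos]
    have hx : ((2:ℝ) ^ p : ℝ) = (2:ℝ) ^ ((p:ℝ)) := (Real.rpow_intCast 2 p).symm
    have hdiv : ((2:ℝ) ^ p) ^ (1 + 3 / r) * a p / (2:ℝ) ^ ((p:ℝ) * β)
        = (2:ℝ) ^ ((p:ℝ) * (1 + 3 / r) - (p:ℝ) * β) * a p := by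
      rw [hx, ← Real.rpow_mul (le_of_lt two_pos), Real.rpow_sub two_pos]
      ring
    rw [hdiv, show ((2:ℝ) ^ ((p:ℝ) * (1 + 3 / r) - (p:ℝ) * β)) = (2:ℝ) ^ ((p:ℝ) * ((-1 + δb + 6 / r) / 2)) by
      congr 1; simp only [hβdef]; field_simp; ring]
    rw [Real.le_sqrt (mul_nonneg (Real.rpow_pos_of_pos two_pos _).le (ha0 p hp)) hS0]
    calc ((2:ℝ) ^ ((p:ℝ) * ((-1 + δb + 6 / r) / 2)) * a p) ^ 2
        = (2:ℝ) ^ ((p:ℝ) * (-1 + δb + 6 / r)) * a p ^ 2 := by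
          rw [mul_pow, ← Real.rpow_natCast ((2:ℝ) ^ ((p:ℝ) * ((-1 + δb + 6 / r) / 2))) 2,
            ← Real.rpow_mul (le_of_lt two_pos)]
          push_cast
          ring_nf
      _ = ((2:ℝ) ^ p) ^ (-1 + δb + 6 / r) * a p ^ 2 := by
          rw [hx, ← Real.rpow_mul (le_of_lt two_pos)]
      _ ≤ S := hterm_le_S p hp
  -- geometric sum bound, by induction
  have hgeom : ∀ q : ℤ, -1 ≤ q →
      ∑ p ∈ Finset.Icc (-1:ℤ) q, (2:ℝ) ^ ((p:ℝ) * β) ≤ (1 - ρ)⁻¹ * (2:ℝ) ^ ((q:ℝ) * β) := by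
    refine fun q hq => Int.le_induction (motive := fun q _ => ∑ p ∈ Finset.Icc (-1:ℤ) q, (2:ℝ) ^ ((p:ℝ) * β) ≤ (1 - ρ)⁻¹ * (2:ℝ) ^ ((q:ℝ) * β)) ?_ ?_ q hq
    · beta_reduce
      rw [show Finset.Icc (-1:ℤ) (-1) = {(-1:ℤ)} from rfl, Finset.sum_singleton]
      have h2 : (0:ℝ) < (2:ℝ) ^ (((-1:ℤ):ℝ) * β) := Real.rpow_pos_of_pos two_pos _
      nth_rewrite 1 [← one_mul ((2:ℝ) ^ (((-1:ℤ):ℝ) * β))]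
      apply mul_le_mul_of_nonneg_right _ (le_of_lt h2)
      rw [le_inv_comm₀ one_pos h1ρ]
      linarith
    · intro q hq ih'
      beta_reduce
      have hins : Finset.Icc (-1:ℤ) (q+1) = insert (q+1) (Finset.Icc (-1:ℤ) q) := by
        ext x
        simp only [Finset.mem_Icc, Finset.mem_insert]
        omega
      rw [hins, Finset.sum_insert (by simp [Finset.mem_Icc])]
      have key : (2:ℝ) ^ (((q:ℝ)+1) * β) * (1 - ρ) + (2:ℝ) ^ ((q:ℝ) * β)
          = (2:ℝ) ^ (((q:ℝ)+1) * β) := by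
        have : (2:ℝ) ^ (((q:ℝ)+1) * β) * ρ = (2:ℝ) ^ ((q:ℝ) * β) := by
          rw [hρdef, ← Real.rpow_add two_pos]
          congr 1
          simp only [hβdef]; ring
        linarith [this]
      have h2q1 : (((q+1:ℤ)):ℝ) = ((q:ℝ) + 1) := by push_cast; ring
      rw [h2q1]
      have hfrac : (1 - ρ)⁻¹ * (2:ℝ) ^ (((q:ℝ)+1) * β)
          = (2:ℝ) ^ (((q:ℝ)+1) * β) + (1 - ρ)⁻¹ * (2:ℝ) ^ ((q:ℝ) * β) := by
        field_simp
        linarith [key]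
      linarith [ih']
  -- the main bound
  have main : ∀ q : ℤ, -1 ≤ q →
      ((2:ℝ) ^ q)⁻¹ * ∑ p ∈ Finset.Icc (-1 : ℤ) q, ((2:ℝ) ^ p) ^ (1 + 3 / r) * a p ≤
        (1 - ρ)⁻¹ * ((2:ℝ) ^ q) ^ ((1 - δb) / 2) * Real.sqrt S := by
    intro q hq
    have hsum : ∑ p ∈ Finset.Icc (-1 : ℤ) q, ((2:ℝ) ^ p) ^ (1 + 3 / r) * a p
        ≤ (1 - ρ)⁻¹ * (2:ℝ) ^ ((q:ℝ) * β) * Real.sqrt S := by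
      calc ∑ p ∈ Finset.Icc (-1 : ℤ) q, ((2:ℝ) ^ p) ^ (1 + 3 / r) * a p
          ≤ ∑ p ∈ Finset.Icc (-1 : ℤ) q, (2:ℝ) ^ ((p:ℝ) * β) * Real.sqrt S := by
            apply Finset.sum_le_sum
            intro p hp
            exact hterm p (Finset.mem_Icc.mp hp).1
        _ = (∑ p ∈ Finset.Icc (-1 : ℤ) q, (2:ℝ) ^ ((p:ℝ) * β)) * Real.sqrt S := by
            rw [Finset.sum_mul]
        _ ≤ (1 - ρ)⁻¹ * (2:ℝ) ^ ((q:ℝ) * β) * Real.sqrt S := by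
            apply mul_le_mul_of_nonneg_right (hgeom q hq) (Real.sqrt_nonneg S)
    have hqinv : ((2:ℝ) ^ q)⁻¹ = (2:ℝ) ^ (-(q:ℝ)) := by
      rw [← Real.rpow_intCast 2 q, ← Real.rpow_neg (le_of_lt two_pos)]
    have hqpow : ((2:ℝ) ^ q) ^ ((1 - δb) / 2) = (2:ℝ) ^ ((q:ℝ) * ((1 - δb)/2)) := by
      rw [← Real.rpow_intCast 2 q, ← Real.rpow_mul (le_of_lt two_pos)]
    have hinvpos : (0:ℝ) ≤ ((2:ℝ) ^ q : ℝ)⁻¹ := by positivity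
    calc ((2:ℝ) ^ q)⁻¹ * ∑ p ∈ Finset.Icc (-1 : ℤ) q, ((2:ℝ) ^ p) ^ (1 + 3 / r) * a p
        ≤ ((2:ℝ) ^ q)⁻¹ * ((1 - ρ)⁻¹ * (2:ℝ) ^ ((q:ℝ) * β) * Real.sqrt S) :=
          mul_le_mul_of_nonneg_left hsum hinvpos
      _ = (1 - ρ)⁻¹ * ((2:ℝ) ^ q) ^ ((1 - δb) / 2) * Real.sqrt S := by
          rw [hqinv, hqpow]
          rw [show ((q:ℝ)) * ((1 - δb)/2) = -(q:ℝ) + (q:ℝ) * β by simp only [hβdef]; ring]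
          rw [Real.rpow_add two_pos]
          ring
  refine ⟨main, ?_⟩
  -- decay part
  intro hδb1
  have hLHS0 : ∀ q : ℤ, -1 ≤ q →
      0 ≤ ((2:ℝ) ^ q)⁻¹ * ∑ p ∈ Finset.Icc (-1 : ℤ) q, ((2:ℝ) ^ p) ^ (1 + 3 / r) * a p := by
    intro q hq
    apply mul_nonneg (by positivity)
    apply Finset.sum_nonneg
    intro p hp
    have hp1 := (Finset.mem_Icc.mp hp).1
    have := Real.rpow_pos_of_pos (zpow_pos two_pos p) (1 + 3/r)
    exact mul_nonneg (le_of_lt this) (ha0 p hp1)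
  -- upper bound tends to zero
  have hub : Tendsto (fun q : ℤ => (1 - ρ)⁻¹ * ((2:ℝ) ^ q) ^ ((1 - δb) / 2) * Real.sqrt S)
      atTop (𝓝 0) := by
    have h1 : Tendsto (fun q : ℤ => ((q:ℝ)) * ((1 - δb)/2)) atTop atBot := by
      apply Tendsto.atTop_mul_const_of_neg (by linarith : (1 - δb)/2 < 0)
      exact tendsto_intCast_atTop_atTop
    have h2 : Tendsto (fun q : ℤ => (2:ℝ) ^ (((q:ℝ)) * ((1 - δb)/2))) atTop (𝓝 0) :=
      (tendsto_rpow_atBot_of_base_gt_one 2 (by norm_num)).comp h1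
    have h3 : (fun q : ℤ => (1 - ρ)⁻¹ * ((2:ℝ) ^ q) ^ ((1 - δb) / 2) * Real.sqrt S)
        = fun q : ℤ => (1 - ρ)⁻¹ * Real.sqrt S * (2:ℝ) ^ (((q:ℝ)) * ((1 - δb)/2)) := by
      funext q
      rw [← Real.rpow_intCast 2 q, ← Real.rpow_mul (le_of_lt two_pos)]
      ring
    rw [h3]
    simpa using (h2.const_mul ((1 - ρ)⁻¹ * Real.sqrt S))
  apply tendsto_of_tendsto_of_tendsto_of_le_of_le' tendsto_const_nhds hub
  · filter_upwards [eventually_ge_atTop (-1 : ℤ)] with q hq using hLHS0 q hq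
  · filter_upwards [eventually_ge_atTop (-1 : ℤ)] with q hq using main q hq
end
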